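/- Let (h_k) be a sequence of pairwise disjoint measurable subsets of (0,1) with λ(h_k) = 2^{−k−2^k} for k ≥ 1, and let x = ∑_{k≥1} 2^{2^k} χ_{h_k}. Then for every 0 < t < 1/4: 1/log₂(1/t) ≤ ∫₀¹ min{x(s), t·x(s)²} ds ≤ 6/log₂(1/t). -/

import Mathlib

open MeasureTheory Set

noncomputable section

open Real Finset MeasureTheory Set
open scoped ENNReal NNReal

noncomputable def Aa (j : ℕ) : ℝ := (2:ℝ) ^ ((2:ℝ) ^ ((j:ℝ) + 1))
noncomputable def vv (j : ℕ) : ℝ := (2:ℝ) ^ (-((j:ℝ)+1) - (2:ℝ) ^ ((j:ℝ)+1))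

lemma keymul (t : ℝ) (j : ℕ) :
    min (Aa j) (t * Aa j ^ 2) * vv j
      = min ((2:ℝ) ^ (-((j:ℝ)+1))) (t * (2:ℝ) ^ ((2:ℝ) ^ ((j:ℝ)+1) - ((j:ℝ)+1))) := by
  have h2 : (0:ℝ) < 2 := by norm_num
  unfold Aa vv
  rw [min_mul_of_nonneg _ _ (le_of_lt (rpow_pos_of_pos h2 _))]
  rw [← Real.rpow_add h2, pow_two, mul_assoc, mul_assoc, ← Real.rpow_add h2,
    ← Real.rpow_add h2]
  ring_nf

lemma hpow_neg (j : ℕ) : (2:ℝ)^(-(j:ℝ)) = (1/2:ℝ)^j := by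
  rw [Real.rpow_neg (by norm_num), Real.rpow_natCast, one_div, inv_pow]

lemma summable_min (t : ℝ) (ht : 0 < t) :
    Summable (fun j : ℕ => min (Aa j) (t * Aa j ^ 2) * vv j) := by
  have h2 : (0:ℝ) < 2 := by norm_num
  refine Summable.of_nonneg_of_le ?_ ?_
    (summable_geometric_of_lt_one (by norm_num) (by norm_num) :
      Summable fun j : ℕ => (1/2:ℝ)^j)
  · intro j
    have hA : 0 < Aa j := rpow_pos_of_pos h2 _
    have hv : 0 < vv j := rpow_pos_of_pos h2 _
    have : 0 ≤ min (Aa j) (t * Aa j ^ 2) := le_min hA.le (by positivity)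
    positivity
  · intro j
    rw [keymul]
    refine le_trans (min_le_left _ _) ?_
    rw [← hpow_neg]
    exact Real.rpow_le_rpow_of_exponent_le (by norm_num) (by linarith [(0:ℝ) ≤ 1])

lemma natfact : ∀ (N : ℕ), ∀ j < N, 2^(j+1) + 2*N ≤ 2^N + 2*j + 2 := by
  intro N
  induction N with
  | zero => omega
  | succ n ih =>
    intro j hj
    rcases Nat.lt_succ_iff_lt_or_eq.mp hj with hlt | rfl
    · have h1 := ih j hlt
      have h2 : 2 ≤ 2^n := by
        calc 2 = 2^1 := rfl
        _ ≤ 2^n := Nat.pow_le_pow_right (by norm_num) (by omega)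
      have h3 : 2^(n+1) = 2*2^n := by ring
      omega
    · omega


lemma sum_bounds (t : ℝ) (ht : 0 < t) (ht4 : t < 1/4) :
    1 / Real.logb 2 (1/t) ≤ (∑' j : ℕ, min (Aa j) (t * Aa j ^ 2) * vv j) ∧
      (∑' j : ℕ, min (Aa j) (t * Aa j ^ 2) * vv j) ≤ 6 / Real.logb 2 (1/t) := by
  have h2 : (0:ℝ) < 2 := by norm_num
  set L := Real.logb 2 (1/t) with hLdef
  have h1t : (0:ℝ) < 1/t := by positivity
  have h2L : (2:ℝ) ^ L = 1/t := Real.rpow_logb h2 (by norm_num) h1t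
  have hL2 : 2 < L := by
    have h4 : (4:ℝ) < 1/t := by rw [lt_div_iff₀ ht]; linarith
    have hlt : Real.logb 2 4 < L := Real.logb_lt_logb (by norm_num) (by norm_num) h4
    have h42 : Real.logb 2 4 = 2 := by
      rw [show (4:ℝ) = 2^(2:ℝ) by rw [show (2:ℝ) = ((2:ℕ):ℝ) by norm_num, Real.rpow_natCast]; norm_num]
      exact Real.logb_rpow h2 (by norm_num)
    linarith
  have hLpos : (0:ℝ) < L := by linarith
  have ht2 : t = (2:ℝ)^(-L) := by
    rw [Real.rpow_neg h2.le, h2L]; field_simp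
  set N := Nat.floor (Real.logb 2 L) with hN
  have hlogL : 1 < Real.logb 2 L := by
    have := Real.logb_lt_logb (b := 2) (by norm_num) (by norm_num) hL2
    simpa using this
  have hN1 : 1 ≤ N := Nat.le_floor (by exact_mod_cast hlogL.le)
  have h2NL : (2:ℝ) ^ (N:ℝ) ≤ L := by
    have h1 : (N:ℝ) ≤ Real.logb 2 L := Nat.floor_le (by positivity)
    calc (2:ℝ)^(N:ℝ) ≤ 2 ^ Real.logb 2 L :=
          Real.rpow_le_rpow_of_exponent_le (by norm_num) h1
      _ = L := Real.rpow_logb h2 (by norm_num) hLpos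
  have hL2N : L < (2:ℝ) ^ ((N:ℝ)+1) := by
    have h1 : Real.logb 2 L < (N:ℝ)+1 := Nat.lt_floor_add_one _
    calc L = 2 ^ Real.logb 2 L := (Real.rpow_logb h2 (by norm_num) hLpos).symm
      _ < 2 ^ ((N:ℝ)+1) := Real.rpow_lt_rpow_of_exponent_lt (by norm_num) h1
  set a : ℕ → ℝ := fun j =>
    min ((2:ℝ) ^ (-((j:ℝ)+1))) (t * (2:ℝ) ^ ((2:ℝ) ^ ((j:ℝ)+1) - ((j:ℝ)+1))) with ha
  have hrw : (∑' j : ℕ, min (Aa j) (t * Aa j ^ 2) * vv j) = ∑' j, a j :=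
    tsum_congr fun j => keymul t j
  have ha_nonneg : ∀ j, 0 ≤ a j := fun j =>
    le_min (rpow_pos_of_pos h2 _).le (by positivity)
  have ha_le : ∀ j, a j ≤ (1/2:ℝ)^j := by
    intro j
    refine le_trans (min_le_left _ _) ?_
    rw [← hpow_neg]
    exact Real.rpow_le_rpow_of_exponent_le (by norm_num) (by linarith)
  have hsum : Summable a :=
    Summable.of_nonneg_of_le ha_nonneg ha_le
      (summable_geometric_of_lt_one (by norm_num) (by norm_num))
  -- tail terms
  have htail : ∀ n : ℕ, a (n + N) = (2:ℝ)^(-(((n:ℝ)+N)+1)) := by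
    intro n
    have hexp : L ≤ (2:ℝ)^(((n:ℝ)+N)+1) :=
      le_trans hL2N.le (Real.rpow_le_rpow_of_exponent_le (by norm_num) (by linarith))
    have : (2:ℝ)^(-(((n:ℝ)+N)+1)) ≤ t * (2:ℝ)^((2:ℝ)^(((n:ℝ)+N)+1) - (((n:ℝ)+N)+1)) := by
      rw [ht2, ← Real.rpow_add h2]
      exact Real.rpow_le_rpow_of_exponent_le (by norm_num) (by linarith)
    have := min_eq_left this
    simpa [ha, Nat.cast_add, add_comm, add_left_comm] using this
  have htailsum : ∑' n : ℕ, a (n + N) = (2:ℝ)^(-(N:ℝ)) := by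
    calc ∑' n : ℕ, a (n + N)
        = ∑' n : ℕ, (2:ℝ)^(-(N:ℝ)) * ((1/2) * (1/2:ℝ)^n) := by
          refine tsum_congr fun n => ?_
          rw [htail n, show -(((n:ℝ)+N)+1) = -(N:ℝ) + (-(1:ℝ) + -(n:ℝ)) by ring,
            Real.rpow_add h2, Real.rpow_add h2, hpow_neg n]
          norm_num
      _ = (2:ℝ)^(-(N:ℝ)) * ((1/2) * ∑' n : ℕ, (1/2:ℝ)^n) := by
          rw [tsum_mul_left, tsum_mul_left]
      _ = (2:ℝ)^(-(N:ℝ)) := by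
          rw [tsum_geometric_of_lt_one (by norm_num) (by norm_num)]; norm_num
  have hsplit := hsum.sum_add_tsum_nat_add N
  have hhead0 : 0 ≤ ∑ i ∈ range N, a i := Finset.sum_nonneg fun i _ => ha_nonneg i
  have hNpos : (0:ℝ) < (2:ℝ)^(N:ℝ) := rpow_pos_of_pos h2 _
  have h1L : 1/L ≤ (2:ℝ)^(-(N:ℝ)) := by
    rw [Real.rpow_neg h2.le, ← one_div]
    exact one_div_le_one_div_of_le hNpos h2NL
  constructor
  · rw [hrw, ← hsplit, htailsum]
    linarith
  · -- head bound
    have hheadj : ∀ j < N, a j ≤ (2:ℝ)^(1-2*(N:ℝ)) * (2:ℝ)^(j:ℕ) := by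
      intro j hj
      have e1 : (2:ℝ)^((j:ℝ)+1) = ((2:ℝ)^(j+1:ℕ) : ℝ) := by
        rw [← Real.rpow_natCast 2 (j+1)]; push_cast; ring_nf
      have e2 : (2:ℝ)^((N:ℝ)) = ((2:ℝ)^(N:ℕ) : ℝ) := by
        rw [← Real.rpow_natCast 2 N]
      have hc : ((2:ℝ)^(j+1:ℕ) + 2*(N:ℝ) ≤ (2:ℝ)^(N:ℕ) + 2*(j:ℝ) + 2) := by
        exact_mod_cast natfact N j hj
      calc a j ≤ t * (2:ℝ) ^ ((2:ℝ) ^ ((j:ℝ)+1) - ((j:ℝ)+1)) := min_le_right _ _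
        _ = (2:ℝ) ^ ((2:ℝ) ^ ((j:ℝ)+1) - ((j:ℝ)+1) + -L) := by
            rw [ht2, ← Real.rpow_add h2]; ring_nf
        _ ≤ (2:ℝ) ^ ((j:ℝ) - 2*(N:ℝ) + 1) := by
            apply Real.rpow_le_rpow_of_exponent_le (by norm_num)
            rw [e1]
            have : (2:ℝ)^(N:ℕ) ≤ L := by rw [← e2]; exact h2NL
            linarith
        _ = (2:ℝ)^(1-2*(N:ℝ)) * (2:ℝ)^(j:ℕ) := by
            rw [← Real.rpow_natCast 2 j, ← Real.rpow_add h2]; ring_nf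
    have hgeo : ∑ i ∈ range N, (2:ℝ)^(i:ℕ) ≤ (2:ℝ)^(N:ℕ) := by
      rw [geom_sum_eq (by norm_num : (2:ℝ) ≠ 1) N]
      have : (0:ℝ) < (2:ℝ)^(N:ℕ) := by positivity
      norm_num
    have hheadsum : ∑ i ∈ range N, a i ≤ 2 * (2:ℝ)^(-(N:ℝ)) := by
      calc ∑ i ∈ range N, a i
          ≤ ∑ i ∈ range N, (2:ℝ)^(1-2*(N:ℝ)) * (2:ℝ)^(i:ℕ) :=
            Finset.sum_le_sum fun i hi => hheadj i (Finset.mem_range.mp hi)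
        _ = (2:ℝ)^(1-2*(N:ℝ)) * ∑ i ∈ range N, (2:ℝ)^(i:ℕ) := by rw [Finset.mul_sum]
        _ ≤ (2:ℝ)^(1-2*(N:ℝ)) * (2:ℝ)^(N:ℕ) := by
            have : (0:ℝ) < (2:ℝ)^(1-2*(N:ℝ)) := rpow_pos_of_pos h2 _
            nlinarith [hgeo]
        _ = 2 * (2:ℝ)^(-(N:ℝ)) := by
            rw [← Real.rpow_natCast 2 N, ← Real.rpow_add h2,
              show (1:ℝ)-2*(N:ℝ)+(N:ℝ) = 1 + -(N:ℝ) by ring, Real.rpow_add h2,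
              Real.rpow_one]
    have h2Nle : (2:ℝ)^(-(N:ℝ)) ≤ 2/L := by
      rw [Real.rpow_neg h2.le, ← one_div, div_le_div_iff₀ hNpos hLpos]
      have e3 : (2:ℝ)^((N:ℝ)+1) = (2:ℝ)^(N:ℝ) * 2 := by
        rw [Real.rpow_add h2, Real.rpow_one]
      nlinarith [hL2N]
    rw [hrw, ← hsplit, htailsum]
    have : 6/L = 3 * (2/L) := by ring
    linarith

/-- Let `(h_k)_{k≥1}` be pairwise disjoint measurable subsets of `(0,1)` with
`λ(h_k) = 2^{-k-2^k}`, and `x = ∑_{k≥1} 2^{2^k} χ_{h_k}`. Then for every `0 < t < 1/4`: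
`1/log₂(1/t) ≤ ∫₀¹ min{x(s), t x(s)²} ds ≤ 6/log₂(1/t)`. -/
theorem sharpness_integral_x_explicit
    (h : ℕ → Set ℝ)
    (hmeas : ∀ k, MeasurableSet (h k))
    (hsub : ∀ k, h k ⊆ Ioo (0:ℝ) 1)
    (hdisj : Pairwise (Function.onFun Disjoint h))
    (hvol : ∀ k : ℕ, 1 ≤ k →
      volume (h k) = ENNReal.ofReal ((2:ℝ) ^ (-(k:ℝ) - (2:ℝ) ^ (k:ℝ))))
    (x : ℝ → ℝ)
    (hx : ∀ s, x s =
      ∑' k : ℕ, (2:ℝ) ^ ((2:ℝ) ^ ((k:ℝ) + 1)) * (h (k + 1)).indicator (fun _ => (1:ℝ)) s) :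
    ∀ t : ℝ, 0 < t → t < 1 / 4 →
      1 / Real.logb 2 (1 / t) ≤ (∫ s in Ioo (0:ℝ) 1, min (x s) (t * x s ^ 2)) ∧
        (∫ s in Ioo (0:ℝ) 1, min (x s) (t * x s ^ 2)) ≤ 6 / Real.logb 2 (1 / t) := by
  intro t ht ht4
  have h2 : (0:ℝ) < 2 := by norm_num
  set c : ℕ → ℝ := fun j => min (Aa j) (t * Aa j ^ 2) with hc
  have hc_nonneg : ∀ j, 0 ≤ c j := fun j =>
    le_min (rpow_pos_of_pos h2 _).le (by have : (0:ℝ) < Aa j := rpow_pos_of_pos h2 _; positivity)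
  have hvv_nonneg : ∀ j, (0:ℝ) ≤ vv j := fun j => (rpow_pos_of_pos h2 _).le
  have hvol' : ∀ j : ℕ, volume (h (j+1)) = ENNReal.ofReal (vv j) := by
    intro j
    rw [hvol (j+1) (by omega)]
    congr 1
    unfold vv
    push_cast
    ring_nf
  have hnotmem : ∀ {i j : ℕ}, i ≠ j → ∀ {s : ℝ}, s ∈ h (j+1) → s ∉ h (i+1) := by
    intro i j hij s hs
    exact Set.disjoint_right.mp (hdisj (show i+1 ≠ j+1 by omega)) hs
  have hxval : ∀ (j : ℕ) (s : ℝ), s ∈ h (j+1) → x s = Aa j := by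
    intro j s hs
    rw [hx s, tsum_eq_single j]
    · simp [Set.indicator_of_mem hs, Aa]
    · intro i hij
      rw [Set.indicator_of_notMem (hnotmem hij hs)]
      simp
  have hx0 : ∀ s : ℝ, (∀ j, s ∉ h (j+1)) → x s = 0 := by
    intro s hs
    rw [hx s]
    convert tsum_zero with i
    rw [Set.indicator_of_notMem (hs i)]
    simp
  have hmin : ∀ s : ℝ, min (x s) (t * x s ^ 2)
      = ∑' j : ℕ, (h (j+1)).indicator (fun _ => c j) s := by
    intro s
    by_cases hs : ∃ j, s ∈ h (j+1)
    · obtain ⟨j, hj⟩ := hs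
      rw [tsum_eq_single j]
      · rw [Set.indicator_of_mem hj, hxval j s hj]
      · intro i hij
        exact Set.indicator_of_notMem (hnotmem hij hj) _
    · push_neg at hs
      rw [hx0 s hs]
      have : ∀ j : ℕ, (h (j+1)).indicator (fun _ => c j) s = 0 := fun j =>
        Set.indicator_of_notMem (hs j) _
      simp [this]
  have hmeasind : ∀ j : ℕ,
      AEStronglyMeasurable ((h (j+1)).indicator (fun _ => c j))
        (volume.restrict (Ioo (0:ℝ) 1)) := fun j =>
    ((measurable_const.indicator (hmeas (j+1))).aestronglyMeasurable)
  have hrestr : ∀ j : ℕ, (volume.restrict (Ioo (0:ℝ) 1)) (h (j+1)) = ENNReal.ofReal (vv j) := by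
    intro j
    rw [Measure.restrict_apply (hmeas (j+1)),
      Set.inter_eq_self_of_subset_left (hsub (j+1)), hvol']
  have hlint : ∀ j : ℕ,
      (∫⁻ s in Ioo (0:ℝ) 1, ‖(h (j+1)).indicator (fun _ => c j) s‖₊)
        = ENNReal.ofReal (c j * vv j) := by
    intro j
    have heq : (fun s : ℝ => (‖(h (j+1)).indicator (fun _ => c j) s‖₊ : ℝ≥0∞))
        = (h (j+1)).indicator (fun _ => (ENNReal.ofReal (c j))) := by
      funext s
      by_cases hs : s ∈ h (j+1)
      · rw [Set.indicator_of_mem hs, Set.indicator_of_mem hs]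
        exact Real.enorm_eq_ofReal (hc_nonneg j)
      · rw [Set.indicator_of_notMem hs, Set.indicator_of_notMem hs]
        simp
    rw [heq, lintegral_indicator (hmeas (j+1)), setLIntegral_const, hrestr j,
      ← ENNReal.ofReal_mul (hc_nonneg j)]
  have hsummable := summable_min t ht
  have hfin : (∑' j : ℕ, ∫⁻ s in Ioo (0:ℝ) 1, ‖(h (j+1)).indicator (fun _ => c j) s‖₊) ≠ ⊤ := by
    rw [tsum_congr hlint, ← ENNReal.ofReal_tsum_of_nonneg
      (fun j => mul_nonneg (hc_nonneg j) (hvv_nonneg j)) hsummable]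
    exact ENNReal.ofReal_ne_top
  have hint : (∫ s in Ioo (0:ℝ) 1, min (x s) (t * x s ^ 2))
      = ∑' j : ℕ, c j * vv j := by
    calc (∫ s in Ioo (0:ℝ) 1, min (x s) (t * x s ^ 2))
        = ∫ s in Ioo (0:ℝ) 1, ∑' j : ℕ, (h (j+1)).indicator (fun _ => c j) s := by
          simp only [hmin]
      _ = ∑' j : ℕ, ∫ s in Ioo (0:ℝ) 1, (h (j+1)).indicator (fun _ => c j) s :=
          integral_tsum hmeasind hfin
      _ = ∑' j : ℕ, c j * vv j := by
          refine tsum_congr fun j => ?_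
          rw [integral_indicator_const _ (hmeas (j+1)), measureReal_def, hrestr j,
            ENNReal.toReal_ofReal (hvv_nonneg j), smul_eq_mul, mul_comm]
  rw [hint]
  exact sum_bounds t ht ht4
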